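/- Let A, B be self-adjoint operators on a Hilbert space with common core D, generating unitary groups, such that A − B extends to a bounded operator and there is a projection Q with ‖(A − B) Q‖ ≤ δ. Then ‖(e^{−iAt} − e^{−iBt}) Q'‖ ≤ δ |t| for any projection Q' commuting with e^{−iBs} for all s and satisfying Q' = Q Q' (more simply: if (A−B)Q is bounded by δ and Q commutes with B, then ‖(e^{−iAt} − e^{−iBt})Q‖ ≤ δ|t|). -/

import Mathlib

open ContinuousLinearMap

/-- Let `A`, `B` be self-adjoint operators (symmetric operators `Aop`,
`Bop` on a common dense core `D`, generating the unitary groups `UA t = e^{-iAt}` and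
`UB t = e^{-iBt}`), such that `A - B` extends to a bounded operator `Δ`.  Let `Q` be an
orthogonal projection commuting with the group `e^{-iBs}` for all `s`, with
`‖Δ ∘ Q‖ ≤ δ`.  Then `‖(e^{-iAt} - e^{-iBt}) Q‖ ≤ δ |t|` for all `t`. -/
theorem space_adiabatic_stmt11
    {H : Type*} [NormedAddCommGroup H] [InnerProductSpace ℂ H] [CompleteSpace H]
    (D : Submodule ℂ H) (hdense : Dense (D : Set H))
    (Aop Bop : D →ₗ[ℂ] H)
    (hsymA : ∀ x y : D, (inner ℂ (Aop x) (y : H) : ℂ) = inner ℂ (x : H) (Aop y))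
    (hsymB : ∀ x y : D, (inner ℂ (Bop x) (y : H) : ℂ) = inner ℂ (x : H) (Bop y))
    (UA UB : ℝ → H →L[ℂ] H)
    (hUA0 : UA 0 = 1) (hUB0 : UB 0 = 1)
    (hUAgrp : ∀ s t : ℝ, UA (s + t) = UA s ∘L UA t)
    (hUBgrp : ∀ s t : ℝ, UB (s + t) = UB s ∘L UB t)
    (hUAiso : ∀ (t : ℝ) (x : H), ‖UA t x‖ = ‖x‖)
    (hUBiso : ∀ (t : ℝ) (x : H), ‖UB t x‖ = ‖x‖)
    (hUAdom : ∀ (t : ℝ), ∀ x ∈ D, UA t x ∈ D)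
    (hUBdom : ∀ (t : ℝ), ∀ x ∈ D, UB t x ∈ D)
    (hgenA : ∀ (x : D) (t : ℝ),
      HasDerivAt (fun s : ℝ => UA s (x : H)) (UA t (-(Complex.I • Aop x))) t)
    (hgenB : ∀ (x : D) (t : ℝ),
      HasDerivAt (fun s : ℝ => UB s (x : H)) (UB t (-(Complex.I • Bop x))) t)
    (Δ : H →L[ℂ] H)
    (hΔ : ∀ x : D, Δ x = Aop x - Bop x)
    (Q : H →L[ℂ] H) (hQproj : Q ∘L Q = Q) (hQsa : IsSelfAdjoint Q)
    (hQdom : ∀ x ∈ D, Q x ∈ D)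
    (hQcomm : ∀ s : ℝ, Q ∘L UB s = UB s ∘L Q)
    (δ : ℝ) (hδ : ‖Δ ∘L Q‖ ≤ δ) :
    ∀ t : ℝ, ‖(UA t - UB t) ∘L Q‖ ≤ δ * |t| := by
  intro t
  have hδ0 : (0:ℝ) ≤ δ := le_trans (norm_nonneg _) hδ
  -- strong continuity of UA on D
  have hUAcontD : ∀ x : D, Continuous fun s : ℝ => UA s (x : H) := fun x =>
    continuous_iff_continuousAt.mpr fun s => (hgenA x s).continuousAt
  -- strong continuity of UA on all of H, by density
  have hUAcont : ∀ z : H, Continuous fun s : ℝ => UA s z := by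
    intro z
    rw [Metric.continuous_iff]
    intro b ε hε
    obtain ⟨z', hz'⟩ := Metric.dense_iff.mp hdense z (ε/3) (by linarith)
    obtain ⟨hz'ball, hz'D⟩ := hz'
    obtain ⟨d, hd, hdlt⟩ :=
      Metric.continuous_iff.mp (hUAcontD ⟨z', hz'D⟩) b (ε/3) (by linarith)
    refine ⟨d, hd, fun a ha => ?_⟩
    have h1 : dist (UA a z) (UA a z') = dist z z' := by
      simp only [dist_eq_norm, ← map_sub, hUAiso]
    have h2 : dist (UA b z') (UA b z) = dist z' z := by
      simp only [dist_eq_norm, ← map_sub, hUAiso]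
    have h3 := hdlt a ha
    have hzz : dist z z' < ε/3 := by rw [dist_comm]; exact hz'ball
    have hzz' : dist z' z < ε/3 := hz'ball
    calc dist (UA a z) (UA b z)
        ≤ dist (UA a z) (UA a z') + dist (UA a z') (UA b z') + dist (UA b z') (UA b z) :=
          dist_triangle4 _ _ _ _
      _ < ε/3 + ε/3 + ε/3 := by rw [h1, h2]; exact add_lt_add (add_lt_add hzz h3) hzz'
      _ = ε := by ring
  -- derivative of s ↦ UA (-s) z for z ∈ D
  have hAderiv : ∀ (z : D) (s₀ : ℝ),
      HasDerivAt (fun s : ℝ => UA (-s) (z : H)) (UA (-s₀) (Complex.I • Aop z)) s₀ := by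
    intro z s₀
    have h0 := hgenA z (-s₀)
    have hneg : HasDerivAt (fun s : ℝ => -s) (-1 : ℝ) s₀ := (hasDerivAt_id s₀).neg
    have h1 := h0.scomp s₀ hneg
    have : ((-1 : ℝ) • UA (-s₀) (-(Complex.I • Aop z))) = UA (-s₀) (Complex.I • Aop z) := by
      simp [map_neg]
    rw [this] at h1
    exact h1
  -- key pointwise bound on D
  have key : ∀ x : H, x ∈ D → ‖((UA t - UB t) ∘L Q) x‖ ≤ δ * |t| * ‖x‖ := by
    intro x hxD
    set y : H := Q x with hy
    have hyD : y ∈ D := hQdom x hxD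
    have hwD : ∀ s : ℝ, UB s y ∈ D := fun s => hUBdom s y hyD
    set G : ℝ → H := fun s => UA (-s) (UB s y) with hG
    set G' : ℝ → H := fun s => UA (-s) (Complex.I • Δ (UB s y)) with hG'
    -- derivative of s ↦ UB s y in the "left" form
    have hBderiv : ∀ s₀ : ℝ,
        HasDerivAt (fun s : ℝ => UB s y) (-(Complex.I • Bop ⟨UB s₀ y, hwD s₀⟩)) s₀ := by
      intro s₀
      have h0 : HasDerivAt (fun σ : ℝ => UB σ (UB s₀ y))
          (UB 0 (-(Complex.I • Bop ⟨UB s₀ y, hwD s₀⟩))) 0 := hgenB ⟨UB s₀ y, hwD s₀⟩ 0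
      rw [hUB0] at h0
      have hinner : HasDerivAt (fun s : ℝ => s - s₀) (1 : ℝ) s₀ := by
        simpa using (hasDerivAt_id s₀).sub_const s₀
      have h1 := HasDerivAt.scomp (g₁' := (1 : H →L[ℂ] H) (-(Complex.I • Bop ⟨UB s₀ y, hwD s₀⟩)))
        s₀ (by simpa using h0) hinner
      have heq : (fun s : ℝ => UB s y) = (fun σ : ℝ => UB σ (UB s₀ y)) ∘ (fun s => s - s₀) := by
        funext s
        have : UB s = UB (s - s₀) ∘L UB s₀ := by
          have := hUBgrp (s - s₀) s₀
          rwa [sub_add_cancel] at this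
        simp [this, Function.comp]
      rw [heq]
      simpa using h1
    -- assemble the derivative of G
    have hGderiv : ∀ s₀ : ℝ, HasDerivAt G (G' s₀) s₀ := by
      intro s₀
      set dB : H := -(Complex.I • Bop ⟨UB s₀ y, hwD s₀⟩) with hdB
      set dA : H := UA (-s₀) (Complex.I • Aop ⟨UB s₀ y, hwD s₀⟩) with hdA
      have hB := hBderiv s₀
      have hA := hAderiv ⟨UB s₀ y, hwD s₀⟩ s₀
      rw [hasDerivAt_iff_isLittleO] at hB hA ⊢
      have T1 : (fun s : ℝ => UA (-s) (UB s y - UB s₀ y - (s - s₀) • dB))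
          =o[nhds s₀] fun s => s - s₀ := by
        rw [← Asymptotics.isLittleO_norm_left]
        have hnorm : (fun s : ℝ => ‖UA (-s) (UB s y - UB s₀ y - (s - s₀) • dB)‖)
            = fun s => ‖UB s y - UB s₀ y - (s - s₀) • dB‖ := funext fun s => hUAiso _ _
        rw [hnorm, Asymptotics.isLittleO_norm_left]
        exact hB
      have T2 : (fun s : ℝ => (s - s₀) • (UA (-s) dB - UA (-s₀) dB))
          =o[nhds s₀] fun s => s - s₀ := by
        have hcont : Filter.Tendsto (fun s : ℝ => UA (-s) dB - UA (-s₀) dB)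
            (nhds s₀) (nhds 0) := by
          have h := ((hUAcont dB).comp continuous_neg).tendsto s₀
          have := h.sub_const (UA (-s₀) dB)
          simpa using this
        have h1 : (fun s : ℝ => UA (-s) dB - UA (-s₀) dB) =o[nhds s₀] fun _ => (1 : ℝ) :=
          (Asymptotics.isLittleO_one_iff ℝ).mpr hcont
        have h2 := (Asymptotics.isBigO_refl (fun s : ℝ => s - s₀) (nhds s₀)).smul_isLittleO h1
        simpa using h2
      have heq : (fun s : ℝ => G s - G s₀ - (s - s₀) • G' s₀)
          = fun s : ℝ => (UA (-s) (UB s y - UB s₀ y - (s - s₀) • dB))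
            + (s - s₀) • (UA (-s) dB - UA (-s₀) dB)
            + (UA (-s) (UB s₀ y) - UA (-s₀) (UB s₀ y) - (s - s₀) • dA) := by
        funext s
        have hΔw : Δ (UB s₀ y) = Aop ⟨UB s₀ y, hwD s₀⟩ - Bop ⟨UB s₀ y, hwD s₀⟩ :=
          hΔ ⟨UB s₀ y, hwD s₀⟩
        simp only [hG, hG', hdA, hdB, hΔw, map_sub, map_smul_of_tower, smul_sub, smul_neg,
          map_neg, smul_add]
        abel
      rw [heq]
      exact (T1.add T2).add hA
    -- bound on the derivative
    have hbound : ∀ s : ℝ, ‖G' s‖ ≤ δ * ‖x‖ := by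
      intro s
      have h1 : ‖G' s‖ = ‖Δ (UB s y)‖ := by
        rw [hG']
        rw [hUAiso, norm_smul, Complex.norm_I, one_mul]
      have h2 : UB s y = Q (UB s x) := by
        have := hQcomm s
        have := congrArg (fun T : H →L[ℂ] H => T x) this
        simpa [hy] using this.symm
      rw [h1, h2]
      calc ‖Δ (Q (UB s x))‖ = ‖(Δ ∘L Q) (UB s x)‖ := rfl
        _ ≤ ‖Δ ∘L Q‖ * ‖UB s x‖ := le_opNorm _ _
        _ = ‖Δ ∘L Q‖ * ‖x‖ := by rw [hUBiso]
        _ ≤ δ * ‖x‖ := mul_le_mul_of_nonneg_right hδ (norm_nonneg x)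
    -- mean value inequality
    have hmvt : ‖G t - G 0‖ ≤ δ * ‖x‖ * ‖t - 0‖ :=
      convex_univ.norm_image_sub_le_of_norm_hasDerivWithin_le
        (fun s _ => (hGderiv s).hasDerivWithinAt) (fun s _ => hbound s)
        (Set.mem_univ 0) (Set.mem_univ t)
    have hG0 : G 0 = y := by simp [hG, hUA0, hUB0]
    have hUAtG : UA t (G t) = UB t y := by
      have hgr := hUAgrp t (-t)
      rw [add_neg_cancel, hUA0] at hgr
      have := congrArg (fun T : H →L[ℂ] H => T (UB t y)) hgr
      simpa [hG] using this.symm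
    have happ : ((UA t - UB t) ∘L Q) x = UA t (G 0 - G t) := by
      rw [map_sub, hG0, hUAtG]
      simp [hy]
    calc ‖((UA t - UB t) ∘L Q) x‖ = ‖UA t (G 0 - G t)‖ := by rw [happ]
      _ = ‖G 0 - G t‖ := hUAiso _ _
      _ = ‖G t - G 0‖ := norm_sub_rev _ _
      _ ≤ δ * ‖x‖ * ‖t - 0‖ := hmvt
      _ = δ * |t| * ‖x‖ := by rw [sub_zero, Real.norm_eq_abs]; ring
  -- extend to all of H by density
  have hall : ∀ x : H, ‖((UA t - UB t) ∘L Q) x‖ ≤ δ * |t| * ‖x‖ := by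
    intro x
    have hclosed : IsClosed {z : H | ‖((UA t - UB t) ∘L Q) z‖ ≤ δ * |t| * ‖z‖} :=
      isClosed_le (continuous_norm.comp ((UA t - UB t) ∘L Q).continuous)
        (continuous_const.mul continuous_norm)
    have hsub : (D : Set H) ⊆ {z : H | ‖((UA t - UB t) ∘L Q) z‖ ≤ δ * |t| * ‖z‖} :=
      fun z hz => key z hz
    have hx : x ∈ closure (D : Set H) := hdense x
    exact closure_minimal hsub hclosed hx
  exact opNorm_le_bound _ (mul_nonneg hδ0 (abs_nonneg t)) hall
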